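/- Let (P,≤) be a finite diamond-free poset having no full subposet isomorphic to Z_n for any even n ≥ 4, and let ⊲₁, ⊲₂ be two adapted orders on P (with respect to the incidence algebra A(P)). Then the transitive closure of (Dec(⊲₁) ∩ Dec(⊲₂)) ∪ Inc(⊲₁) ∪ Inc(⊲₂) is a partial order on P (i.e., it is antisymmetric). -/

import Mathlib

/-!
STATEMENT 16.  For the incidence algebra `A(P)` of a finite diamond-free poset `(P, ≤)`
(so `A(P)` is hereditary), an order `⊲` on `P` is adapted iff for all `i ≤ j` incomparable
under `⊲` there is `k ∈ [i,j]` with `i ⊲ k` and `j ⊲ k`; the decreasing and increasing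
relations are: `(x, y) ∈ Dec(⊲)` iff `y ≤ x` and every `k ∈ [y, x]` satisfies `k ⊲ y`, and
`(x, y) ∈ Inc(⊲)` iff `x ≤ y` and every `k ∈ [x, y]` satisfies `k ⊲ y`.
-/

section
variable {P : Type*} [PartialOrder P]

/-- Adaptedness of a partial order `⊲` for the (hereditary) incidence algebra of `(P, ≤)`. -/
def AdaptedOrd (lhd : P → P → Prop) : Prop :=
  ∀ i j : P, i ≤ j → ¬ lhd i j → ¬ lhd j i →
    ∃ k : P, i ≤ k ∧ k ≤ j ∧ lhd i k ∧ lhd j k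

/-- `(x, y) ∈ Dec(⊲)` : `S(x)` is a composition factor of the standard module `Δ(y)`. -/
def DecRel (lhd : P → P → Prop) (x y : P) : Prop :=
  y ≤ x ∧ ∀ k : P, y ≤ k → k ≤ x → lhd k y

/-- `(x, y) ∈ Inc(⊲)` : `S(x)` is a composition factor of the costandard module `∇(y)`. -/
def IncRel (lhd : P → P → Prop) (x y : P) : Prop :=
  x ≤ y ∧ ∀ k : P, x ≤ k → k ≤ y → lhd k y

end

set_option maxHeartbeats 1000000

namespace ST16
open Relation List

variable {P : Type*} [PartialOrder P]

structure Ctx (P : Type*) [PartialOrder P] : Type _ where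
  l : Bool → P → P → Prop
  hdf : ∀ a b c d : P, a ≤ b → b ≤ d → a ≤ c → c ≤ d → b ≤ c ∨ c ≤ b
  lrefl : ∀ b x, l b x x
  ltrans : ∀ b x y z, l b x y → l b y z → l b x z
  lantisymm : ∀ b x y, l b x y → l b y x → x = y
  had : ∀ b, AdaptedOrd (l b)

variable (C : Ctx P)

/-- both-orders decreasing relation -/
def Ctx.DP (x y : P) : Prop := ∀ b, DecRel (C.l b) x y
/-- some-order increasing relation -/
def Ctx.UP (x y : P) : Prop := ∃ b, IncRel (C.l b) x y
/-- a step -/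
def Ctx.S (x y : P) : Prop := C.DP x y ∨ C.UP x y

variable {C}

lemma Ctx.DP_le {x y : P} (h : C.DP x y) : y ≤ x := (h true).1
lemma Ctx.UP_le {x y : P} (h : C.UP x y) : x ≤ y := h.choose_spec.1

lemma Ctx.UP_refl (x : P) : C.UP x x :=
  ⟨true, le_refl x, fun k h1 h2 => by
    have : k = x := le_antisymm h2 h1
    subst this; exact C.lrefl true k⟩

lemma Ctx.DP_refl (x : P) : C.DP x x :=
  fun b => ⟨le_refl x, fun k h1 h2 => by
    have : k = x := le_antisymm h2 h1
    subst this; exact C.lrefl b k⟩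

lemma Ctx.S_refl (x : P) : C.S x x := Or.inr (Ctx.UP_refl x)

/-- classification of a step -/
lemma Ctx.S_cases {x y : P} (h : C.S x y) : (y < x ∧ C.DP x y) ∨ C.UP x y := by
  rcases h with h | h
  · rcases eq_or_lt_of_le (Ctx.DP_le h) with he | hlt
    · subst he; exact Or.inr (Ctx.UP_refl _)
    · exact Or.inl ⟨hlt, h⟩
  · exact Or.inr h

lemma Ctx.DP_trans {x y z : P} (h1 : C.DP x y) (h2 : C.DP y z) : C.DP x z := by
  have hzy : z ≤ y := (h2 true).1
  have hyx : y ≤ x := (h1 true).1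
  intro b
  refine ⟨hzy.trans hyx, fun k hk1 hk2 => ?_⟩
  rcases C.hdf z k y x hk1 hk2 hzy hyx with hky | hyk
  · exact (h2 b).2 k hk1 hky
  · exact C.ltrans b _ _ _ ((h1 b).2 k hyk hk2) ((h2 b).2 y hzy (le_refl _))

lemma Ctx.DP_trunc {x y z : P} (h : C.DP x y) (h1 : y ≤ z) (h2 : z ≤ x) : C.DP z y :=
  fun b => ⟨h1, fun k hk1 hk2 => (h b).2 k hk1 (hk2.trans h2)⟩

lemma IncRel_trunc {la : P → P → Prop} {x y z : P} (h : IncRel la x y) (h1 : x ≤ z)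
    (h2 : z ≤ y) : IncRel la z y :=
  ⟨h2, fun k hk1 hk2 => h.2 k (h1.trans hk1) hk2⟩

lemma Ctx.UP_trunc {x y z : P} (h : C.UP x y) (h1 : x ≤ z) (h2 : z ≤ y) : C.UP z y := by
  obtain ⟨b, hb⟩ := h; exact ⟨b, IncRel_trunc hb h1 h2⟩

/-- a finite nonempty set has an r-maximal element for transitive antisymmetric r -/
lemma exists_rmax (r : P → P → Prop) (htr : ∀ x y z, r x y → r y z → r x z)
    (han : ∀ x y, r x y → r y x → x = y) (s : Finset P) (hs : s.Nonempty) :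
    ∃ k ∈ s, ∀ j ∈ s, r k j → j = k := by
  classical
  induction s using Finset.induction with
  | empty => exact absurd hs (by simp)
  | @insert a s ha ih =>
    rcases s.eq_empty_or_nonempty with rfl | hs'
    · exact ⟨a, by simp, fun j hj hr => by simpa using hj⟩
    · obtain ⟨k, hk, hkmax⟩ := ih hs'
      by_cases hka : r k a
      · refine ⟨a, Finset.mem_insert_self _ _, fun j hj hr => ?_⟩
        rcases Finset.mem_insert.1 hj with rfl | hj
        · rfl
        · have hj' : j = k := hkmax j hj (htr _ _ _ hka hr)
          subst hj'
          exact (han _ _ hka hr)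
      · refine ⟨k, Finset.mem_insert_of_mem hk, fun j hj hr => ?_⟩
        rcases Finset.mem_insert.1 hj with rfl | hj
        · exact absurd hr hka
        · exact hkmax j hj hr

variable [Finite P]

/-- Claim C : every interval has a top element for each order -/
lemma Ctx.top (b : Bool) {x y : P} (hxy : x ≤ y) :
    ∃ k, x ≤ k ∧ k ≤ y ∧ ∀ j, x ≤ j → j ≤ y → C.l b j k := by
  classical
  have : Fintype P := Fintype.ofFinite P
  set s : Finset P := {j | x ≤ j ∧ j ≤ y} with hs
  have hmem : ∀ j : P, j ∈ s ↔ x ≤ j ∧ j ≤ y := by intro j; simp [hs]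
  have hns : s.Nonempty := ⟨x, (hmem x).2 ⟨le_refl x, hxy⟩⟩
  obtain ⟨k, hk, hkmax⟩ := exists_rmax (C.l b) (C.ltrans b) (C.lantisymm b) s hns
  obtain ⟨hxk, hky⟩ := (hmem k).1 hk
  refine ⟨k, hxk, hky, fun j hj1 hj2 => ?_⟩
  by_contra hjk
  have hkj : ¬ C.l b k j := by
    intro hkj
    have := hkmax j ((hmem j).2 ⟨hj1, hj2⟩) hkj
    subst this; exact hjk (C.lrefl b j)
  rcases C.hdf x j k y hj1 hj2 hxk hky with hle | hle
  · obtain ⟨m, hm1, hm2, hm3, hm4⟩ := C.had b j k hle hjk hkj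
    have hmk : m = k := hkmax m ((hmem m).2 ⟨hj1.trans hm1, hm2.trans hky⟩) hm4
    subst hmk; exact hjk hm3
  · obtain ⟨m, hm1, hm2, hm3, hm4⟩ := C.had b k j hle hkj hjk
    have hmk : m = k := hkmax m ((hmem m).2 ⟨hxk.trans hm1, hm2.trans hj2⟩) hm3
    subst hmk; exact hjk hm4

/-- upward path predicate -/
def Ctx.PUp (x k : P) : Prop := ∃ lp : List P, List.Chain C.UP x lp ∧ (x :: lp).getLast? = some k

lemma Ctx.PUp_refl (x : P) : C.PUp x x := ⟨[], List.Chain.nil, rfl⟩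

lemma Ctx.PUp_step {x k k' : P} (h : C.UP x k) (h2 : C.PUp k k') : C.PUp x k' := by
  obtain ⟨lp, hc, hl⟩ := h2
  exact ⟨k :: lp, List.chain_cons.2 ⟨h, hc⟩, by simpa using hl⟩

/-- Ascend or stall -/
lemma Ctx.aos {x y : P} (hxy : x ≤ y) :
    ∃ k, x ≤ k ∧ k ≤ y ∧ C.PUp x k ∧ (k = y ∨ (k < y ∧ C.DP y k)) := by
  classical
  have key : ∀ n : ℕ, ∀ x : P, x ≤ y → ({j | x ≤ j ∧ j ≤ y}.ncard ≤ n) →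
      ∃ k, x ≤ k ∧ k ≤ y ∧ C.PUp x k ∧ (k = y ∨ (k < y ∧ C.DP y k)) := by
    intro n
    induction n with
    | zero =>
      intro x hxy hcard
      exfalso
      have hx : x ∈ {j | x ≤ j ∧ j ≤ y} := ⟨le_refl x, hxy⟩
      have : 0 < ({j | x ≤ j ∧ j ≤ y}).ncard :=
        Set.ncard_pos (Set.toFinite _) |>.2 ⟨x, hx⟩
      omega
    | succ n ih =>
      intro x hxy hcard
      obtain ⟨k1, hk11, hk12, hk13⟩ := Ctx.top (C := C) true hxy
      obtain ⟨k2, hk21, hk22, hk23⟩ := Ctx.top (C := C) false hxy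
      by_cases hs : k1 = x ∧ k2 = x
      · rcases eq_or_lt_of_le hxy with rfl | hlt
        · exact ⟨x, le_refl x, le_refl x, Ctx.PUp_refl x, Or.inl rfl⟩
        · refine ⟨x, le_refl x, hxy, Ctx.PUp_refl x, Or.inr ⟨hlt, fun b => ⟨hxy, fun j hj1 hj2 => ?_⟩⟩⟩
          cases b
          · simpa [hs.2] using hk23 j hj1 hj2
          · simpa [hs.1] using hk13 j hj1 hj2
      · -- some top is above x
        have hstep : ∃ k', x < k' ∧ k' ≤ y ∧ C.UP x k' := by
          rcases not_and_or.1 hs with hne | hne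
          · refine ⟨k1, lt_of_le_of_ne hk11 (Ne.symm hne), hk12,
              ⟨true, hk11, fun j hj1 hj2 => hk13 j hj1 (hj2.trans hk12)⟩⟩
          · refine ⟨k2, lt_of_le_of_ne hk21 (Ne.symm hne), hk22,
              ⟨false, hk21, fun j hj1 hj2 => hk23 j hj1 (hj2.trans hk22)⟩⟩
        obtain ⟨k', hxk', hk'y, hup⟩ := hstep
        have hsub : {j | k' ≤ j ∧ j ≤ y} ⊆ {j | x ≤ j ∧ j ≤ y} \ {x} := by
          intro j hj
          exact ⟨⟨(le_of_lt hxk').trans hj.1, hj.2⟩, by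
            simp only [Set.mem_singleton_iff]
            intro hjx; subst hjx; exact absurd hj.1 (not_le_of_gt hxk')⟩
        have hcard' : ({j | k' ≤ j ∧ j ≤ y}).ncard ≤ n := by
          have h1 : ({j | k' ≤ j ∧ j ≤ y}).ncard ≤ (({j | x ≤ j ∧ j ≤ y}) \ {x}).ncard :=
            Set.ncard_le_ncard hsub ((Set.toFinite _).diff)
          have hx : x ∈ {j | x ≤ j ∧ j ≤ y} := ⟨le_refl x, hxy⟩
          have h2 : (({j | x ≤ j ∧ j ≤ y}) \ {x}).ncard
              = ({j | x ≤ j ∧ j ≤ y}).ncard - 1 := by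
            rw [Set.ncard_diff_singleton_of_mem hx]
          have h3 : 0 < ({j | x ≤ j ∧ j ≤ y}).ncard :=
            Set.ncard_pos (Set.toFinite _) |>.2 ⟨x, hx⟩
          omega
        obtain ⟨k, h1, h2, h3, h4⟩ := ih k' hk'y hcard'
        exact ⟨k, (le_of_lt hxk').trans h1, h2, Ctx.PUp_step hup h3, h4⟩
  exact key ({j | x ≤ j ∧ j ≤ y}.ncard) x hxy (le_refl _)

-- === Part 2: descent counting, cycles, structured context ===

open scoped Classical in
/-- number of strict descents along a path starting at `x` -/
noncomputable def dwnF (x : P) : List P → ℕ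
  | [] => 0
  | b :: t => (if b < x then 1 else 0) + dwnF b t

@[simp] lemma dwnF_nil (x : P) : dwnF x ([] : List P) = 0 := rfl

open scoped Classical in
lemma dwnF_cons (x b : P) (t : List P) :
    dwnF x (b :: t) = (if b < x then 1 else 0) + dwnF b t := rfl

lemma dwnF_glue (l₁ : List P) : ∀ (x y : P) (l₂ : List P),
    (x :: l₁).getLast? = some y → dwnF x (l₁ ++ l₂) = dwnF x l₁ + dwnF y l₂ := by
  induction l₁ with
  | nil => intro x y l₂ h; simp at h; subst h; simp [dwnF_cons]
  | cons b t ih =>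
    intro x y l₂ h
    have h' : (b :: t).getLast? = some y := by
      rwa [List.getLast?_cons_cons] at h
    rw [List.cons_append, dwnF_cons, dwnF_cons, ih b y l₂ h']
    omega

lemma chain_glue {r : P → P → Prop} (l₁ : List P) : ∀ (x y : P) (l₂ : List P),
    List.Chain r x l₁ → (x :: l₁).getLast? = some y → List.Chain r y l₂ →
    List.Chain r x (l₁ ++ l₂) := by
  induction l₁ with
  | nil => intro x y l₂ _ h hc2; simp at h; subst h; simpa using hc2
  | cons b t ih =>
    intro x y l₂ hc1 h hc2
    rw [List.Chain, List.chain_cons] at hc1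
    have h' : (b :: t).getLast? = some y := by rwa [List.getLast?_cons_cons] at h
    exact List.chain_cons.2 ⟨hc1.1, ih b y l₂ hc1.2 h' hc2⟩

lemma getLast?_snoc (x : P) (l : List P) (y : P) : (x :: (l ++ [y])).getLast? = some y := by
  rw [show x :: (l ++ [y]) = (x :: l) ++ [y] by simp]
  exact List.getLast?_concat

lemma getLast?_glue (l₁ : List P) (x y z : P) (l₂ : List P)
    (h : (x :: l₁).getLast? = some y) (h2 : (y :: l₂).getLast? = some z) (hne : l₂ ≠ []) :
    (x :: (l₁ ++ l₂)).getLast? = some z := by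
  rw [show x :: (l₁ ++ l₂) = (x :: l₁) ++ l₂ by simp, List.getLast?_append_of_ne_nil _ hne]
  rcases List.exists_cons_of_ne_nil hne with ⟨b, t, rfl⟩
  rwa [List.getLast?_cons_cons] at h2

variable {C : Ctx P}

lemma chainUP_le {x : P} {m : List P} (h : List.Chain C.UP x m) {y : P}
    (hl : (x :: m).getLast? = some y) : x ≤ y := by
  induction m generalizing x with
  | nil => simp at hl; exact le_of_eq hl
  | cons b t ih =>
    rw [List.Chain, List.chain_cons] at h
    have hl' : (b :: t).getLast? = some y := by rwa [List.getLast?_cons_cons] at hl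
    exact (Ctx.UP_le h.1).trans (ih h.2 hl')

lemma dwnF_chainUP {x : P} {m : List P} (h : List.Chain C.UP x m) : dwnF x m = 0 := by
  induction m generalizing x with
  | nil => rfl
  | cons b t ih =>
    rw [List.Chain, List.chain_cons] at h
    rw [dwnF_cons, if_neg (not_lt_of_ge (Ctx.UP_le h.1)), ih h.2]

lemma chainUP_toS {x : P} {m : List P} (h : List.Chain C.UP x m) : List.Chain C.S x m :=
  List.Chain.imp (fun _ _ hab => Or.inr hab) h

/-- zero descents implies monotone: head ≤ last -/
lemma le_of_chain_dwn0 {x y : P} {m : List P} (h : List.Chain C.S x m)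
    (h0 : dwnF x m = 0) (hl : (x :: m).getLast? = some y) : x ≤ y := by
  induction m generalizing x with
  | nil => simp at hl; subst hl; rfl
  | cons b t ih =>
    rw [List.Chain, List.chain_cons] at h
    rw [dwnF_cons] at h0
    have hxb : x ≤ b := by
      rcases Ctx.S_cases h.1 with ⟨hlt, _⟩ | hup
      · rw [if_pos hlt] at h0; omega
      · exact Ctx.UP_le hup
    have hl' : (b :: t).getLast? = some y := by rwa [List.getLast?_cons_cons] at hl
    exact hxb.trans (ih h.2 (by omega) hl')

/-- Structured minimal cycle context -/
structure SCtx (C : Ctx P) : Type _ where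
  s : ℕ
  hs : 2 ≤ s
  v : ℕ → P
  w : ℕ → P
  mid : ℕ → List P
  hvper : ∀ t, v (t + s) = v t
  hwper : ∀ t, w (t + s) = w t
  hrun : ∀ t, List.Chain C.UP (v t) (mid t ++ [w t])
  hdp : ∀ t, C.DP (w t) (v (t + 1))
  hlt : ∀ t, v (t + 1) < w t
  hmin : ∀ (a : P) (l : List P), List.Chain C.S a l → (a :: l).getLast? = some a →
      1 ≤ dwnF a l → s ≤ dwnF a l

variable {D : SCtx C}

lemma SCtx.vw (D : SCtx C) (t : ℕ) : D.v t ≤ D.w t :=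
  chainUP_le (D.hrun t) (getLast?_snoc _ _ _)

lemma SCtx.vw' (D : SCtx C) (t : ℕ) : D.v (t + 1) ≤ D.w t := le_of_lt (D.hlt t)

/-- run including final peak, as a path piece -/
def SCtx.runp (D : SCtx C) (t : ℕ) : List P := D.mid t ++ [D.w t]

lemma SCtx.runp_last (D : SCtx C) (t : ℕ) : (D.v t :: D.runp t).getLast? = some (D.w t) :=
  getLast?_snoc _ _ _

/-- half-segment: ascend from `v t` to `w t`, then descend to `v (t+1)` -/
def SCtx.half (D : SCtx C) (t : ℕ) : List P := D.runp t ++ [D.v (t + 1)]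

lemma SCtx.half_chain (D : SCtx C) (t : ℕ) : List.Chain C.S (D.v t) (D.half t) := by
  refine chain_glue _ _ _ _ (chainUP_toS (D.hrun t)) (D.runp_last t) ?_
  simp only [List.Chain, List.chain_cons, List.IsChain.singleton, and_true]
  exact Or.inl (D.hdp t)

lemma SCtx.half_last (D : SCtx C) (t : ℕ) :
    ((D.v t) :: D.half t).getLast? = some (D.v (t + 1)) := by
  rw [SCtx.half]; exact getLast?_snoc _ _ _

open scoped Classical in
lemma SCtx.half_dwn (D : SCtx C) (t : ℕ) : dwnF (D.v t) (D.half t) = 1 := by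
  have h1 := dwnF_glue (D.runp t) (D.v t) (D.w t) [D.v (t+1)] (D.runp_last t)
  have h2 : dwnF (D.v t) (D.runp t) = 0 := dwnF_chainUP (D.hrun t)
  have h3 : dwnF (D.w t) [D.v (t+1)] = 1 := by
    rw [dwnF_cons, if_pos (D.hlt t), dwnF_nil]
  rw [SCtx.half, h1, h2, h3]

/-- arc from `v t` through `k` full half-segments, ending at `v (t+k)` -/
def SCtx.arc (D : SCtx C) : ℕ → ℕ → List P
  | _, 0 => []
  | t, (k+1) => D.half t ++ D.arc (t+1) k

lemma SCtx.arc_last (D : SCtx C) : ∀ k t, ((D.v t) :: D.arc t k).getLast? = some (D.v (t + k)) := by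
  intro k
  induction k with
  | zero => intro t; simp [SCtx.arc]
  | succ n ih =>
    intro t
    rw [SCtx.arc]
    rcases n with _ | n
    · rw [show D.arc (t+1) 0 = [] from rfl, List.append_nil]
      exact D.half_last t
    · have hne : D.arc (t+1) (n+1) ≠ [] := by
        rw [SCtx.arc]; simp [SCtx.half, SCtx.runp]
      have := getLast?_glue (D.half t) (D.v t) (D.v (t+1)) (D.v (t + 1 + (n+1)))
        (D.arc (t+1) (n+1)) (D.half_last t) (ih (t+1)) hne
      rwa [show t + 1 + (n + 1) = t + (n + 1 + 1) by omega] at this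

lemma SCtx.arc_chain (D : SCtx C) : ∀ k t, List.Chain C.S (D.v t) (D.arc t k) := by
  intro k
  induction k with
  | zero => intro t; exact List.Chain.nil
  | succ n ih =>
    intro t
    rw [SCtx.arc]
    exact chain_glue _ _ _ _ (D.half_chain t) (D.half_last t) (ih (t+1))

lemma SCtx.arc_dwn (D : SCtx C) : ∀ k t, dwnF (D.v t) (D.arc t k) = k := by
  intro k
  induction k with
  | zero => intro t; rfl
  | succ n ih =>
    intro t
    rw [SCtx.arc, dwnF_glue (D.half t) _ (D.v (t+1)) _ (D.half_last t), D.half_dwn t, ih (t+1)]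
    omega
-- === Part 3: path toolkit and direct reductions ===

/-- a path from `a` through `l` to `b` -/
def PTo (C : Ctx P) (a : P) (l : List P) (b : P) : Prop :=
  List.Chain C.S a l ∧ (a :: l).getLast? = some b

lemma PTo.comp {a b c : P} {l₁ l₂ : List P} (h1 : PTo C a l₁ b) (h2 : PTo C b l₂ c) :
    PTo C a (l₁ ++ l₂) c := by
  rcases l₂ with _ | ⟨d, t⟩
  · obtain ⟨hc2, hl2⟩ := h2
    simp only [List.getLast?_singleton, Option.some.injEq] at hl2
    rw [List.append_nil]
    exact ⟨h1.1, hl2 ▸ h1.2⟩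
  · exact ⟨chain_glue _ _ _ _ h1.1 h1.2 h2.1,
      getLast?_glue _ _ _ _ _ h1.2 h2.2 (by simp)⟩

lemma PTo.dwn_comp {a b c : P} {l₁ l₂ : List P} (h1 : PTo C a l₁ b) (_ : PTo C b l₂ c) :
    dwnF a (l₁ ++ l₂) = dwnF a l₁ + dwnF b l₂ :=
  dwnF_glue _ _ _ _ h1.2

lemma SCtx.runP (D : SCtx C) (t : ℕ) : PTo C (D.v t) (D.runp t) (D.w t) :=
  ⟨chainUP_toS (D.hrun t), D.runp_last t⟩

open scoped Classical in
lemma SCtx.runP_dwn (D : SCtx C) (t : ℕ) : dwnF (D.v t) (D.runp t) = 0 :=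
  dwnF_chainUP (D.hrun t)

lemma SCtx.arcP (D : SCtx C) (t k : ℕ) : PTo C (D.v t) (D.arc t k) (D.v (t + k)) :=
  ⟨D.arc_chain k t, D.arc_last k t⟩

/-- single edge given by a DP relation -/
lemma edgeDP {q b : P} (h : C.DP q b) : PTo C q [b] b :=
  ⟨List.chain_cons.2 ⟨Or.inl h, List.Chain.nil⟩, rfl⟩

open scoped Classical in
lemma edgeDP_dwn {q b : P} (h : b < q) : dwnF q [b] = 1 := by
  rw [dwnF_cons, if_pos h, dwnF_nil]

lemma pathUpP {x k : P} (h : C.PUp x k) : ∃ lp, PTo C x lp k ∧ dwnF x lp = 0 := by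
  obtain ⟨lp, hc, hl⟩ := h
  exact ⟨lp, ⟨chainUP_toS hc, hl⟩, dwnF_chainUP hc⟩

/-- the contradiction helper -/
lemma SCtx.contra (D : SCtx C) {a : P} {l : List P} (h : PTo C a l a)
    (h1 : 1 ≤ dwnF a l) (h2 : dwnF a l < D.s) : False :=
  absurd (D.hmin a l h.1 h.2 h1) (by omega)

/-- `v t = w (t+k)` for `1 ≤ k < s` is impossible -/
lemma SCtx.RvwEqPos (D : SCtx C) (t k : ℕ) (hk1 : 1 ≤ k) (hk2 : k < D.s)
    (h : D.v t = D.w (t + k)) : False := by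
  have hp : PTo C (D.v t) (D.arc t k ++ D.runp (t + k)) (D.w (t + k)) :=
    (D.arcP t k).comp (D.runP (t + k))
  have hd : dwnF (D.v t) (D.arc t k ++ D.runp (t + k)) = k := by
    rw [(D.arcP t k).dwn_comp (D.runP (t+k)), D.arc_dwn, D.runP_dwn]
    omega
  refine D.contra ⟨hp.1, ?_⟩ (by rw [hd]; omega) (by rw [hd]; omega)
  rw [hp.2, h]

/-- `v t = v (t+k)` for `1 ≤ k < s` is impossible -/
lemma SCtx.RvvEq (D : SCtx C) (t k : ℕ) (hk1 : 1 ≤ k) (hk2 : k < D.s)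
    (h : D.v t = D.v (t + k)) : False := by
  have hp := D.arcP t k
  have hd := D.arc_dwn k t
  refine D.contra ⟨hp.1, ?_⟩ (by rw [hd]; omega) (by rw [hd]; omega)
  rw [hp.2, h]

/-- `w t = w (t+k)` for `1 ≤ k < s` is impossible -/
lemma SCtx.RwwEq (D : SCtx C) (t k : ℕ) (hk1 : 1 ≤ k) (hk2 : k < D.s)
    (h : D.w t = D.w (t + k)) : False := by
  have e1 : PTo C (D.v (t+1)) (D.arc (t+1) (k-1) ++ D.runp (t+k)) (D.w (t+k)) := by
    have := (D.arcP (t+1) (k-1)).comp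
      (show PTo C (D.v (t+1+(k-1))) (D.runp (t+k)) (D.w (t+k)) by
        rw [show t+1+(k-1) = t + k by omega]; exact D.runP (t+k))
    exact this
  have e2 : PTo C (D.w (t+k)) [D.v (t+1)] (D.v (t+1)) := edgeDP (h ▸ D.hdp t)
  have hp := e1.comp e2
  have hd : dwnF (D.v (t+1)) ((D.arc (t+1) (k-1) ++ D.runp (t+k)) ++ [D.v (t+1)]) = k := by
    rw [e1.dwn_comp e2,
      (D.arcP (t+1) (k-1)).dwn_comp
        (show PTo C (D.v (t+1+(k-1))) (D.runp (t+k)) (D.w (t+k)) by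
          rw [show t+1+(k-1) = t + k by omega]; exact D.runP (t+k)),
      D.arc_dwn, show t+1+(k-1) = t + k by omega, D.runP_dwn,
      edgeDP_dwn (h ▸ D.hlt t)]
    omega
  exact D.contra hp (by rw [hd]; omega) (by rw [hd]; omega)

/-- `v t = w t` is impossible -/
lemma SCtx.RvwEq0 (D : SCtx C) (t : ℕ) (h : D.v t = D.w t) : False := by
  have hs := D.hs
  obtain ⟨s2, hs2⟩ : ∃ m, D.s = m + 2 := ⟨D.s - 2, by omega⟩
  set y := t + 1 + s2 with hy
  have hyv : D.v (y + 1) = D.v t := by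
    rw [show y + 1 = t + D.s by omega]; exact D.hvper t
  by_cases hdeg : D.v (t+1) = D.w y
  · -- degenerate: contradiction by strictness
    have h1 : D.v t < D.v (t+1) := by
      have := D.hlt y; rw [hyv, ← hdeg] at this; exact this
    have h2 : D.v (t+1) < D.v t := by
      have := D.hlt t; rwa [← h] at this
    exact absurd h1 (not_lt_of_gt h2)
  · have hdp1 : C.DP (D.w y) (D.v t) := hyv ▸ D.hdp y
    have hdp2 : C.DP (D.v t) (D.v (t+1)) := h ▸ D.hdp t
    have hdp3 : C.DP (D.w y) (D.v (t+1)) := Ctx.DP_trans hdp1 hdp2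
    have e1 : PTo C (D.v (t+1)) (D.arc (t+1) s2 ++ D.runp y) (D.w y) :=
      (D.arcP (t+1) s2).comp (D.runP y)
    have e2 : PTo C (D.w y) [D.v (t+1)] (D.v (t+1)) := edgeDP hdp3
    have hlt' : D.v (t+1) < D.w y :=
      lt_of_le_of_ne (Ctx.DP_le hdp3) hdeg
    have hp := e1.comp e2
    have hd : dwnF (D.v (t+1)) ((D.arc (t+1) s2 ++ D.runp y) ++ [D.v (t+1)]) = s2 + 1 := by
      rw [e1.dwn_comp e2, (D.arcP (t+1) s2).dwn_comp (D.runP y), D.arc_dwn,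
        D.runP_dwn, edgeDP_dwn hlt']
    exact D.contra hp (by rw [hd]; omega) (by rw [hd]; omega)

/-- chain elements are all ≥ head -/
lemma chainUP_all {x : P} {m : List P} (h : List.Chain C.UP x m) :
    ∀ u ∈ m, x ≤ u := by
  induction m generalizing x with
  | nil => simp
  | cons b t ih =>
    rw [List.Chain, List.chain_cons] at h
    intro u hu
    rcases List.mem_cons.1 hu with rfl | hu
    · exact Ctx.UP_le h.1
    · exact (Ctx.UP_le h.1).trans (ih h.2 u hu)

lemma chainUP_le_last {x y : P} {m : List P} (h : List.Chain C.UP x m)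
    (hl : (x :: m).getLast? = some y) : ∀ u ∈ x :: m, u ≤ y := by
  induction m generalizing x with
  | nil => simp at hl; subst hl; simp
  | cons b t ih =>
    rw [List.Chain, List.chain_cons] at h
    rw [List.getLast?_cons_cons] at hl
    intro u hu
    rcases List.mem_cons.1 hu with rfl | hu
    · exact (Ctx.UP_le h.1).trans (chainUP_le h.2 hl)
    · exact ih h.2 hl u hu

/-- split a run at an intermediate comparable element -/
lemma run_split_aux {m : List P} : ∀ {x wz z : P}, List.Chain C.UP x m →
    (x :: m).getLast? = some wz → x ≤ z → z ≤ wz →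
    (∀ u ∈ x :: m, u ≤ z ∨ z ≤ u) →
    ∃ b L2, C.UP z b ∧ List.Chain C.UP b L2 ∧ (b :: L2).getLast? = some wz := by
  induction m with
  | nil =>
    intro x wz z _ hl hxz hzw _
    simp at hl; subst hl
    have : z = x := le_antisymm hzw hxz
    subst this
    exact ⟨z, [], Ctx.UP_refl z, List.Chain.nil, rfl⟩
  | cons c t ih =>
    intro x wz z hc hl hxz hzw hcomp
    rw [List.Chain, List.chain_cons] at hc
    rw [List.getLast?_cons_cons] at hl
    rcases hcomp c (by simp) with hcz | hzc
    · exact ih hc.2 hl hcz hzw (fun u hu => hcomp u (by simp [List.mem_cons] at hu ⊢; tauto))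
    · obtain ⟨bl, hbl⟩ := hc.1
      exact ⟨c, t, ⟨bl, IncRel_trunc hbl hxz hzc⟩, hc.2, hl⟩

lemma SCtx.run_split (D : SCtx C) (hdf : ∀ a b c d : P, a ≤ b → b ≤ d → a ≤ c → c ≤ d → b ≤ c ∨ c ≤ b)
    (t : ℕ) {z : P} (h1 : D.v t ≤ z) (h2 : z ≤ D.w t) :
    ∃ b L2, C.UP z b ∧ List.Chain C.UP b L2 ∧ (b :: L2).getLast? = some (D.w t) := by
  refine run_split_aux (D.hrun t) (D.runp_last t) h1 h2 (fun u hu => ?_)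
  have hu1 : D.v t ≤ u := by
    rcases List.mem_cons.1 hu with rfl | hu
    · rfl
    · exact chainUP_all (D.hrun t) u hu
  have hu2 : u ≤ D.w t := chainUP_le_last (D.hrun t) (D.runp_last t) u hu
  exact hdf (D.v t) u z (D.w t) hu1 hu2 h1 h2
-- === Part 4: adjacent reductions ===

lemma SCtx.halfP (D : SCtx C) (t : ℕ) : PTo C (D.v t) (D.half t) (D.v (t+1)) :=
  ⟨D.half_chain t, D.half_last t⟩

/-- (β) `v (x+1) ≤ v x` is impossible -/
lemma SCtx.Rvv1 (D : SCtx C) (x : ℕ) (h : D.v (x+1) ≤ D.v x) : False := by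
  have hs := D.hs
  obtain ⟨k, hk1, hk2, hpup, hk⟩ := Ctx.aos (C := C) h
  obtain ⟨lp, hlp, hlpd⟩ := pathUpP hpup
  rcases hk with rfl | ⟨hklt, hdpk⟩
  · -- reached v x; close with half x
    have hp := hlp.comp (D.halfP x)
    have hd : dwnF (D.v (x+1)) (lp ++ D.half x) = 1 := by
      rw [hlp.dwn_comp (D.halfP x), hlpd, D.half_dwn]
    exact D.contra hp (by omega) (by omega)
  · by_cases hkv : k = D.v (x+1)
    · -- stall at the very bottom : compose DP down past the previous peak
      subst hkv
      obtain ⟨s2, hs2⟩ : ∃ m, D.s = m + 2 := ⟨D.s - 2, by omega⟩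
      set y := x + s2 + 1 with hy
      have hyv : D.v (y + 1) = D.v x := by
        rw [show y + 1 = x + D.s by omega]; exact D.hvper x
      have hdp3 : C.DP (D.w y) (D.v (x+1)) :=
        Ctx.DP_trans (hyv ▸ D.hdp y) hdpk
      rcases eq_or_lt_of_le (Ctx.DP_le hdp3) with heq | hlt'
      · -- v (x+1) = w y : equality reduction
        rcases Nat.eq_zero_or_pos s2 with rfl | hs2pos
        · exact D.RvwEq0 (x+1) (by rw [heq, show y = x + 1 by omega])
        · exact D.RvwEqPos (x+1) s2 hs2pos (by omega)
            (by rw [heq, show y = x + 1 + s2 by omega])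
      · have e1 : PTo C (D.v (x+1)) (D.arc (x+1) s2 ++ D.runp y) (D.w y) :=
          (D.arcP (x+1) s2).comp
            (show PTo C (D.v (x+1+s2)) (D.runp y) (D.w y) by
              rw [show x+1+s2 = y by omega]; exact D.runP y)
        have e2 : PTo C (D.w y) [D.v (x+1)] (D.v (x+1)) := edgeDP hdp3
        have hd : dwnF (D.v (x+1)) ((D.arc (x+1) s2 ++ D.runp y) ++ [D.v (x+1)]) = s2 + 1 := by
          rw [e1.dwn_comp e2, (D.arcP (x+1) s2).dwn_comp
            (show PTo C (D.v (x+1+s2)) (D.runp y) (D.w y) by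
              rw [show x+1+s2 = y by omega]; exact D.runP y),
            D.arc_dwn, show x+1+s2 = y by omega, D.runP_dwn, edgeDP_dwn hlt']
        exact D.contra (e1.comp e2) (by rw [hd]; omega) (by rw [hd]; omega)
    · -- stall strictly above v (x+1) : window edge back
      have hkgt : D.v (x+1) < k := lt_of_le_of_ne hk1 (Ne.symm hkv)
      have hkw : k ≤ D.w x := le_trans (le_of_lt hklt) (D.vw x)
      have hedge : C.DP k (D.v (x+1)) := Ctx.DP_trunc (D.hdp x) hk1 hkw
      have e2 : PTo C k [D.v (x+1)] (D.v (x+1)) := edgeDP hedge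
      have hp := hlp.comp e2
      have hd : dwnF (D.v (x+1)) (lp ++ [D.v (x+1)]) = 1 := by
        rw [hlp.dwn_comp e2, hlpd, edgeDP_dwn hkgt]
      exact D.contra hp (by omega) (by omega)

/-- (α) `v x ≤ v (x+1)` is impossible -/
lemma SCtx.Rvv2 (D : SCtx C) (x : ℕ) (h : D.v x ≤ D.v (x+1)) : False := by
  have hs := D.hs
  by_cases hs3 : 3 ≤ D.s
  · obtain ⟨k, hk1, hk2, hpup, hk⟩ := Ctx.aos (C := C) h
    obtain ⟨lp, hlp, hlpd⟩ := pathUpP hpup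
    rcases hk with rfl | ⟨hklt, hdpk⟩
    · -- reached v (x+1); close with the long arc
      have e2 : PTo C (D.v (x+1)) (D.arc (x+1) (D.s - 1)) (D.v x) := by
        have := D.arcP (x+1) (D.s-1)
        rwa [show x+1+(D.s-1) = x + D.s by omega, D.hvper] at this
      have hp := hlp.comp e2
      have hd : dwnF (D.v x) (lp ++ D.arc (x+1) (D.s-1)) = D.s - 1 := by
        rw [hlp.dwn_comp e2, hlpd, D.arc_dwn]; omega
      exact D.contra hp (by omega) (by omega)
    · -- stall k < v (x+1) : k lies in the run of x
      have hkw : k ≤ D.w x := le_trans (le_of_lt hklt) (D.vw' x)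
      obtain ⟨b, L2, hub, hcb, hlb⟩ := D.run_split C.hdf x hk1 hkw
      have e1 : PTo C k (b :: L2) (D.w x) := by
        refine ⟨List.chain_cons.2 ⟨Or.inr hub, chainUP_toS hcb⟩, ?_⟩
        rw [List.getLast?_cons_cons]; exact hlb
      have e1d : dwnF k (b :: L2) = 0 :=
        dwnF_chainUP (List.chain_cons.2 ⟨hub, hcb⟩)
      have e2 : PTo C (D.w x) [D.v (x+1)] (D.v (x+1)) := edgeDP (D.hdp x)
      have e3 : PTo C (D.v (x+1)) [k] k := edgeDP hdpk
      have hp := (e1.comp e2).comp e3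
      have hd : dwnF k ((b :: L2 ++ [D.v (x+1)]) ++ [k]) = 2 := by
        rw [(e1.comp e2).dwn_comp e3, e1.dwn_comp e2, e1d,
          edgeDP_dwn (D.hlt x), edgeDP_dwn hklt]
      exact D.contra hp (by omega) (by omega)
  · -- s = 2
    have hs2 : D.s = 2 := by omega
    have hvv : D.v (x+2) = D.v x := by
      rw [show x + 2 = x + D.s by omega]; exact D.hvper x
    have h1 : C.DP (D.v (x+1)) (D.v x) :=
      Ctx.DP_trunc (hvv ▸ D.hdp (x+1)) h (D.vw (x+1))
    have h2 : C.DP (D.w x) (D.v x) := Ctx.DP_trans (D.hdp x) h1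
    rcases eq_or_lt_of_le (Ctx.DP_le h2) with heq | hlt'
    · exact D.RvwEq0 x heq
    · have e1 := D.runP x
      have e2 : PTo C (D.w x) [D.v x] (D.v x) := edgeDP h2
      have hd : dwnF (D.v x) (D.runp x ++ [D.v x]) = 1 := by
        rw [e1.dwn_comp e2, D.runP_dwn, edgeDP_dwn hlt']
      exact D.contra (e1.comp e2) (by omega) (by omega)

/-- (γ) `w x ≤ w (x+1)` is impossible -/
lemma SCtx.Rww1 (D : SCtx C) (x : ℕ) (h : D.w x ≤ D.w (x+1)) : False := by
  have hs := D.hs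
  obtain ⟨s2, hs2⟩ : ∃ m, D.s = m + 2 := ⟨D.s - 2, by omega⟩
  obtain ⟨b, L2, hub, hcb, hlb⟩ := D.run_split C.hdf (x+1) (D.vw' x) h
  have e1 : PTo C (D.w x) (b :: L2) (D.w (x+1)) := by
    refine ⟨List.chain_cons.2 ⟨Or.inr hub, chainUP_toS hcb⟩, ?_⟩
    rw [List.getLast?_cons_cons]; exact hlb
  have e1d : dwnF (D.w x) (b :: L2) = 0 :=
    dwnF_chainUP (List.chain_cons.2 ⟨hub, hcb⟩)
  have e2 : PTo C (D.w (x+1)) [D.v (x+2)] (D.v (x+2)) := edgeDP (D.hdp (x+1))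
  have e3 : PTo C (D.v (x+2)) (D.arc (x+2) s2) (D.v (x+2+s2)) := D.arcP (x+2) s2
  have e4 : PTo C (D.v (x+2+s2)) (D.runp x) (D.w x) := by
    rw [show x+2+s2 = x + D.s by omega, D.hvper]; exact D.runP x
  have hp := ((e1.comp e2).comp e3).comp e4
  have hd : dwnF (D.w x) (((b :: L2 ++ [D.v (x+2)]) ++ D.arc (x+2) s2) ++ D.runp x)
      = s2 + 1 := by
    rw [((e1.comp e2).comp e3).dwn_comp e4, (e1.comp e2).dwn_comp e3,
      e1.dwn_comp e2, e1d, edgeDP_dwn (D.hlt (x+1)), D.arc_dwn]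
    have : dwnF (D.v (x+2+s2)) (D.runp x) = 0 := by
      rw [show x+2+s2 = x + D.s by omega, D.hvper]; exact D.runP_dwn x
    rw [this]; omega
  exact D.contra hp (by omega) (by omega)

/-- (δ) `w (x+1) ≤ w x` is impossible -/
lemma SCtx.Rww2 (D : SCtx C) (x : ℕ) (h : D.w (x+1) ≤ D.w x) : False := by
  have hs := D.hs
  rcases eq_or_lt_of_le (D.vw (x+1)) with heq | hlt'
  · exact D.RvwEq0 (x+1) heq
  · have hedge : C.DP (D.w (x+1)) (D.v (x+1)) :=
      Ctx.DP_trunc (D.hdp x) (D.vw (x+1)) h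
    have e1 := D.runP (x+1)
    have e2 : PTo C (D.w (x+1)) [D.v (x+1)] (D.v (x+1)) := edgeDP hedge
    have hd : dwnF (D.v (x+1)) (D.runp (x+1) ++ [D.v (x+1)]) = 1 := by
      rw [e1.dwn_comp e2, D.runP_dwn, edgeDP_dwn hlt']
    exact D.contra (e1.comp e2) (by omega) (by omega)
-- === Part 5: generic crown contradiction ===

lemma crown_contra {Q : Type*} [PartialOrder Q]
    (hZ : ∀ n : ℕ, 4 ≤ n → Even n →
      ¬ ∃ f : Fin n → Q, Function.Injective f ∧
        ∀ a b : Fin n,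
          (a = b ∨ (Even a.val ∧ (b.val = (a.val + 1) % n ∨ b.val = (a.val + (n - 1)) % n)))
            ↔ f a ≤ f b)
    {r : ℕ} (hr : 2 ≤ r) (A B : ℕ → Q)
    (hab : ∀ i, i < r → A i ≤ B i)
    (hba : ∀ i, i + 1 < r → A (i+1) ≤ B i)
    (hba0 : A 0 ≤ B (r-1))
    (hAA : ∀ i j, i < r → j < r → A i ≤ A j → i = j)
    (hBB : ∀ i j, i < r → j < r → B i ≤ B j → i = j)
    (hBA : ∀ i j, i < r → j < r → ¬ (B i ≤ A j))
    (hAB : ∀ i j, i < r → j < r → A i ≤ B j → (i = j ∨ i = j + 1 ∨ (i = 0 ∧ j = r - 1))) :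
    False := by
  classical
  refine hZ (2*r) (by omega) ⟨r, by omega⟩ ⟨fun a => if a.val % 2 = 0 then A (a.val / 2) else B (a.val / 2), ?_, ?_⟩
  · -- injectivity
    intro a b hfab
    have ha := a.isLt
    have hb := b.isLt
    by_cases hpa : a.val % 2 = 0 <;> by_cases hpb : b.val % 2 = 0 <;>
      simp only [hpa, hpb, if_true, if_false, if_pos, if_neg, not_false_iff] at hfab
    · have := hAA (a.val/2) (b.val/2) (by omega) (by omega) (le_of_eq hfab)
      exact Fin.ext (by omega)
    · exact absurd hfab.symm.le (hBA (b.val/2) (a.val/2) (by omega) (by omega))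
    · exact absurd hfab.le (hBA (a.val/2) (b.val/2) (by omega) (by omega))
    · have := hBB (a.val/2) (b.val/2) (by omega) (by omega) (le_of_eq hfab)
      exact Fin.ext (by omega)
  · intro a b
    have ha := a.isLt
    have hb := b.isLt
    constructor
    · rintro (rfl | ⟨hae, hb1 | hb2⟩)
      · rfl
      · -- b = a + 1
        have hae' : a.val % 2 = 0 := Nat.even_iff.1 hae
        have hb' : b.val = a.val + 1 := by
          rw [hb1, Nat.mod_eq_of_lt (by omega)]
        simp only [hae', if_true, hb', if_pos]
        rw [if_neg (by omega)]
        have : (a.val + 1) / 2 = a.val / 2 := by omega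
        rw [this]
        exact hab (a.val/2) (by omega)
      · -- b = a + (n-1)
        have hae' : a.val % 2 = 0 := Nat.even_iff.1 hae
        rcases Nat.eq_zero_or_pos a.val with haz | hapos
        · have hb' : b.val = 2*r - 1 := by
            rw [hb2, haz, Nat.mod_eq_of_lt (by omega)]; omega
          simp only [hae', if_true, hb']
          rw [if_neg (by omega)]
          have h1 : a.val / 2 = 0 := by omega
          have h2 : (2*r-1)/2 = r - 1 := by omega
          rw [h1, h2]
          exact hba0
        · have hb' : b.val = a.val - 1 := by
            rw [hb2, show a.val + (2*r-1) = (a.val - 1) + 2*r*1 by omega,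
              Nat.add_mul_mod_self_left, Nat.mod_eq_of_lt (by omega)]
          simp only [hae', if_true, hb']
          rw [if_neg (by omega)]
          have h2 : (a.val - 1)/2 = a.val/2 - 1 := by omega
          rw [h2]
          have := hba (a.val/2 - 1) (by omega)
          rwa [show a.val/2 - 1 + 1 = a.val/2 by omega] at this
    · intro hle
      by_cases hpa : a.val % 2 = 0 <;> by_cases hpb : b.val % 2 = 0 <;>
        simp only [hpa, hpb, if_true, if_false, if_pos, if_neg, not_false_iff] at hle
      · have := hAA (a.val/2) (b.val/2) (by omega) (by omega) hle
        exact Or.inl (Fin.ext (by omega))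
      · -- even a, odd b
        refine Or.inr ⟨Nat.even_iff.2 hpa, ?_⟩
        rcases hAB (a.val/2) (b.val/2) (by omega) (by omega) hle with he | he | ⟨he1, he2⟩
        · left
          rw [Nat.mod_eq_of_lt (show a.val + 1 < 2*r by omega)]
          omega
        · right
          rw [show a.val + (2*r-1) = (a.val - 1) + 2*r*1 by omega,
            Nat.add_mul_mod_self_left, Nat.mod_eq_of_lt (by omega)]
          omega
        · right
          rw [show a.val + (2*r-1) = 2*r - 1 by omega, Nat.mod_eq_of_lt (by omega)]
          omega
      · exact absurd hle (hBA (a.val/2) (b.val/2) (by omega) (by omega))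
      · have := hBB (a.val/2) (b.val/2) (by omega) (by omega) hle
        exact Or.inl (Fin.ext (by omega))
-- === Part 6: fences and the master contradiction ===

def SCtx.FA (D : SCtx C) (x r : ℕ) : Prop := D.v (x + r) ≤ D.w x
def SCtx.FB (D : SCtx C) (x k : ℕ) : Prop := D.v x ≤ D.w (x + k)
def SCtx.Fen (D : SCtx C) (r : ℕ) : Prop :=
  2 ≤ r ∧ r ≤ D.s ∧ ((∃ x, D.FA x r) ∨ (∃ x k, r = k + 1 ∧ D.FB x k))

lemma SCtx.Fen_s (D : SCtx C) : D.Fen D.s :=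
  ⟨D.hs, le_refl _, Or.inl ⟨0, show D.v (0 + D.s) ≤ D.w 0 by rw [D.hvper 0]; exact D.vw 0⟩⟩

lemma SCtx.RvwEqOff (D : SCtx C) (x a : ℕ) (ha : a ≤ D.s) (h : D.v (x + a) = D.w x) :
    False := by
  rcases Nat.eq_zero_or_pos a with rfl | hpos
  · exact D.RvwEq0 x (by simpa using h)
  rcases eq_or_lt_of_le ha with rfl | hlt
  · rw [D.hvper x] at h; exact D.RvwEq0 x h
  · refine D.RvwEqPos (x+a) (D.s - a) (by omega) (by omega) ?_
    rw [show x + a + (D.s - a) = x + D.s by omega, D.hwper x]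
    exact h

section Kit
variable (D : SCtx C) {ρ : ℕ}

lemma SCtx.KVV (hρs : ρ ≤ D.s) (hρmin : ∀ r, r < ρ → ¬ D.Fen r) {x p q : ℕ}
    (hw1 : p < q + ρ) (hw2 : q < p + ρ) (hne : p ≠ q) (h : D.v (x+p) ≤ D.v (x+q)) :
    False := by
  rcases lt_or_gt_of_ne hne with hlt | hgt
  · rcases eq_or_lt_of_le (show p + 1 ≤ q by omega) with he | h2
    · refine D.Rvv2 (x+p) ?_
      rwa [show x + p + 1 = x + q by omega]
    · refine hρmin (q-p) (by omega) ⟨by omega, by omega, Or.inr ⟨x+p, q-p-1, by omega, ?_⟩⟩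
      refine le_trans h ?_
      rw [show x + q = (x + p + (q - p - 1)) + 1 by omega]
      exact D.vw' _
  · rcases eq_or_lt_of_le (show q + 1 ≤ p by omega) with he | h2
    · refine D.Rvv1 (x+q) ?_
      rwa [show x + q + 1 = x + p by omega]
    · refine hρmin (p-q) (by omega) ⟨by omega, by omega, Or.inl ⟨x+q, ?_⟩⟩
      show D.v (x+q+(p-q)) ≤ D.w (x+q)
      rw [show x + q + (p-q) = x + p by omega]
      exact le_trans h (D.vw _)

lemma SCtx.KWW (hρs : ρ ≤ D.s) (hρmin : ∀ r, r < ρ → ¬ D.Fen r) {x p q : ℕ}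
    (hw1 : p < q + ρ) (hw2 : q < p + ρ) (hne : p ≠ q) (h : D.w (x+p) ≤ D.w (x+q)) :
    False := by
  rcases lt_or_gt_of_ne hne with hlt | hgt
  · rcases eq_or_lt_of_le (show p + 1 ≤ q by omega) with he | h2
    · refine D.Rww1 (x+p) ?_
      rwa [show x + p + 1 = x + q by omega]
    · refine hρmin (q-p) (by omega) ⟨by omega, by omega, Or.inr ⟨x+p+1, q-p-1, by omega, ?_⟩⟩
      show D.v (x+p+1) ≤ D.w (x+p+1+(q-p-1))
      rw [show x + p + 1 + (q-p-1) = x + q by omega]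
      exact le_trans (D.vw' _) h
  · rcases eq_or_lt_of_le (show q + 1 ≤ p by omega) with he | h2
    · refine D.Rww2 (x+q) ?_
      rwa [show x + q + 1 = x + p by omega]
    · refine hρmin (p-q) (by omega) ⟨by omega, by omega, Or.inl ⟨x+q, ?_⟩⟩
      show D.v (x+q+(p-q)) ≤ D.w (x+q)
      rw [show x + q + (p-q) = x + p by omega]
      exact le_trans (D.vw _) h

lemma SCtx.KWV (hρs : ρ ≤ D.s) (hρmin : ∀ r, r < ρ → ¬ D.Fen r) {x p q : ℕ}
    (hw1 : p < q + ρ) (hw2 : q < p + ρ) (h : D.w (x+p) ≤ D.v (x+q)) : False := by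
  by_cases hq : q = p
  · subst hq
    exact D.RvwEq0 (x+q) (le_antisymm (D.vw (x+q)) h)
  · by_cases hq1 : q = p + 1
    · subst hq1
      have := D.hlt (x+p)
      rw [show x + p + 1 = x + (p+1) by omega] at this
      exact absurd (lt_of_lt_of_le this h) (lt_irrefl _)
    · exact D.KVV hρs hρmin hw1 hw2 (fun hh => hq (by omega)) ((D.vw (x+p)).trans h)

end Kit

/-- master: the structured minimal cycle yields a crown, contradiction -/
lemma SCtx.noCrown (D : SCtx C)
    (hZ : ∀ n : ℕ, 4 ≤ n → Even n →
      ¬ ∃ f : Fin n → P, Function.Injective f ∧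
        ∀ a b : Fin n,
          (a = b ∨ (Even a.val ∧ (b.val = (a.val + 1) % n ∨ b.val = (a.val + (n - 1)) % n)))
            ↔ f a ≤ f b) : False := by
  classical
  have hmem : D.s ∈ {r | D.Fen r} := D.Fen_s
  set ρ := sInf {r | D.Fen r} with hρdef
  have hρ : D.Fen ρ := Nat.sInf_mem ⟨D.s, hmem⟩
  have hρmin : ∀ r, r < ρ → ¬ D.Fen r := fun r hr => Nat.notMem_of_lt_sInf hr
  obtain ⟨hρ2, hρs, hsh⟩ := hρ
  rcases hsh with ⟨x, hFA⟩ | ⟨x, k, hrk, hFB⟩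
  · -- shape A : valleys at x+1,…,x+ρ ; peaks at x,…,x+ρ-1 (reverse orientation)
    refine crown_contra hZ hρ2 (fun i => D.v (x + (ρ - i))) (fun i => D.w (x + (ρ - 1 - i)))
      ?_ ?_ ?_ ?_ ?_ ?_ ?_
    · intro i hi
      rw [show x + (ρ - i) = (x + (ρ - 1 - i)) + 1 by omega]
      exact D.vw' _
    · intro i hi
      rw [show ρ - (i+1) = ρ - 1 - i by omega]
      exact D.vw _
    · rw [show ρ - 0 = ρ by omega, show ρ - 1 - (ρ - 1) = 0 by omega, Nat.add_zero]
      exact hFA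
    · intro i j hi hj h
      by_contra hne'
      exact D.KVV hρs hρmin (show ρ - i < (ρ - j) + ρ by omega)
        (show ρ - j < (ρ - i) + ρ by omega) (by omega) h
    · intro i j hi hj h
      by_contra hne'
      exact D.KWW hρs hρmin (show ρ - 1 - i < (ρ - 1 - j) + ρ by omega)
        (show ρ - 1 - j < (ρ - 1 - i) + ρ by omega) (by omega) h
    · intro i j hi hj h
      by_cases hc : i = ρ - 1 ∧ j = 0
      · obtain ⟨rfl, rfl⟩ := hc
        rw [show ρ - 1 - (ρ - 1) = 0 by omega, show ρ - 0 = ρ by omega, Nat.add_zero] at h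
        exact D.RvwEqOff x ρ hρs (le_antisymm hFA h)
      · exact D.KWV hρs hρmin (show ρ - 1 - i < (ρ - j) + ρ by omega)
          (show ρ - j < (ρ - 1 - i) + ρ by omega) h
    · intro i j hi hj h
      by_cases hc1 : i = j
      · exact Or.inl hc1
      by_cases hc2 : i = j + 1
      · exact Or.inr (Or.inl hc2)
      by_cases hc3 : i = 0 ∧ j = ρ - 1
      · exact Or.inr (Or.inr hc3)
      exfalso
      -- p = ρ - i, q = ρ - 1 - j
      rcases lt_trichotomy (ρ - i) (ρ - 1 - j) with hpq | hpq | hpq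
      · -- p < q : FB fence of size q - p + 1
        refine hρmin ((ρ-1-j) - (ρ-i) + 1) (by omega)
          ⟨by omega, by omega, Or.inr ⟨x + (ρ - i), (ρ-1-j) - (ρ-i), rfl, ?_⟩⟩
        show D.v (x + (ρ - i)) ≤ D.w (x + (ρ - i) + ((ρ-1-j) - (ρ-i)))
        rw [show x + (ρ - i) + ((ρ-1-j) - (ρ-i)) = x + (ρ - 1 - j) by omega]
        exact h
      · -- p = q : means i = j + 1, excluded
        exact hc2 (by omega)
      · -- p > q
        by_cases hq1 : ρ - i = (ρ - 1 - j) + 1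
        · exact hc1 (by omega)
        · refine hρmin ((ρ - i) - (ρ-1-j)) (by omega)
            ⟨by omega, by omega, Or.inl ⟨x + (ρ-1-j), ?_⟩⟩
          show D.v (x + (ρ-1-j) + ((ρ - i) - (ρ-1-j))) ≤ D.w (x + (ρ-1-j))
          rw [show x + (ρ-1-j) + ((ρ - i) - (ρ-1-j)) = x + (ρ - i) by omega]
          exact h
  · -- shape B : valleys and peaks at x,…,x+ρ-1
    refine crown_contra hZ hρ2 (fun i => D.v (x + i)) (fun i => D.w (x + i))
      ?_ ?_ ?_ ?_ ?_ ?_ ?_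
    · intro i hi; exact D.vw _
    · intro i hi
      rw [show x + (i+1) = (x + i) + 1 by omega]
      exact D.vw' _
    · rw [Nat.add_zero, show ρ - 1 = k by omega]
      exact hFB
    · intro i j hi hj h
      by_contra hne'
      exact D.KVV hρs hρmin (by omega) (by omega) hne' h
    · intro i j hi hj h
      by_contra hne'
      exact D.KWW hρs hρmin (by omega) (by omega) hne' h
    · intro i j hi hj h
      exact D.KWV hρs hρmin (by omega) (by omega) h
    · intro i j hi hj h
      by_cases hc1 : i = j
      · exact Or.inl hc1
      by_cases hc2 : i = j + 1
      · exact Or.inr (Or.inl hc2)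
      by_cases hc3 : i = 0 ∧ j = ρ - 1
      · exact Or.inr (Or.inr hc3)
      exfalso
      rcases lt_trichotomy i j with hpq | hpq | hpq
      · refine hρmin (j - i + 1) (by omega)
          ⟨by omega, by omega, Or.inr ⟨x + i, j - i, rfl, ?_⟩⟩
        show D.v (x + i) ≤ D.w (x + i + (j - i))
        rw [show x + i + (j - i) = x + j by omega]
        exact h
      · exact hc1 hpq
      · refine hρmin (i - j) (by omega) ⟨by omega, by omega, Or.inl ⟨x + j, ?_⟩⟩
        show D.v (x + j + (i - j)) ≤ D.w (x + j)
        rw [show x + j + (i - j) = x + i by omega]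
        exact h
-- === Part 7: parsing a minimal cycle ===

/-- linear decomposition of a path into ascents separated by descents -/
def SegsFrom (C : Ctx P) : P → List (List P × P × P) → P → Prop
  | a, [], z => ∃ m, List.Chain C.UP a m ∧ (a :: m).getLast? = some z
  | a, (md, pk, vn) :: rest, z =>
      List.Chain C.UP a (md ++ [pk]) ∧ C.DP pk vn ∧ vn < pk ∧ SegsFrom C vn rest z

lemma parse_lin : ∀ (l : List P) (a z : P), List.Chain C.S a l →
    (a :: l).getLast? = some z →
    ∃ segs : List (List P × P × P), segs.length = dwnF a l ∧ SegsFrom C a segs z := by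
  intro l
  induction l with
  | nil =>
    intro a z _ hl
    simp only [List.getLast?_singleton, Option.some.injEq] at hl
    exact ⟨[], by simp, ⟨[], List.Chain.nil, by simp [hl]⟩⟩
  | cons b t ih =>
    intro a z hc hl
    rw [List.Chain, List.chain_cons] at hc
    rw [List.getLast?_cons_cons] at hl
    obtain ⟨segs, hlen, hsf⟩ := ih b z hc.2 hl
    rcases Ctx.S_cases hc.1 with ⟨hba, hdp⟩ | hup
    · refine ⟨([], a, b) :: segs, ?_, ?_, hdp, hba, hsf⟩
      · rw [dwnF_cons, if_pos hba]; simp only [List.length_cons, hlen]; omega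
      · exact List.chain_cons.2 ⟨Ctx.UP_refl a, List.Chain.nil⟩
    · have hd : dwnF a (b :: t) = dwnF b t := by
        rw [dwnF_cons, if_neg (not_lt_of_ge (Ctx.UP_le hup))]
        omega
      cases segs with
      | nil =>
        obtain ⟨m, hm, hml⟩ := hsf
        refine ⟨[], by rw [hd]; exact hlen, ⟨b :: m, List.chain_cons.2 ⟨hup, hm⟩, ?_⟩⟩
        rw [List.getLast?_cons_cons]; exact hml
      | cons sg rest =>
        obtain ⟨md, pk, vn⟩ := sg
        obtain ⟨hchain, hdp', hlt', hrest⟩ := hsf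
        refine ⟨(b :: md, pk, vn) :: rest, by rw [hd]; exact hlen, ?_, hdp', hlt', hrest⟩
        show List.Chain C.UP a ((b :: md) ++ [pk])
        rw [List.cons_append]
        exact List.chain_cons.2 ⟨hup, hchain⟩

/-- the one-descent case is impossible -/
lemma s1_aux : ∀ (L : List P) (vn pk : P), List.Chain C.UP vn L →
    ((vn :: L).getLast? = some pk) → C.DP pk vn → vn = pk := by
  intro L
  induction L with
  | nil => intro vn pk _ hl _; simpa using hl
  | cons b t ih =>
    intro vn pk hc hl hdp
    rw [List.Chain, List.chain_cons] at hc
    rw [List.getLast?_cons_cons] at hl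
    obtain ⟨bl, hinc⟩ := hc.1
    have hvb : C.l bl vn b := hinc.2 vn (le_refl _) hinc.1
    have hbpk : b ≤ pk := chainUP_le hc.2 hl
    have hbv : C.l bl b vn := (hdp bl).2 b hinc.1 hbpk
    have hbe : b = vn := C.lantisymm bl b vn hbv hvb
    subst hbe
    exact ih b pk hc.2 hl hdp

-- modular helpers
lemma mhelp2 {s t : ℕ} (hs : 1 ≤ s) (h : t % s = 0) : (t + (s-1)) % s = s - 1 := by
  rw [Nat.add_mod, h, Nat.zero_add, Nat.mod_mod_of_dvd _ dvd_rfl,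
    Nat.mod_eq_of_lt (by omega)]

lemma mhelp3 {s t i : ℕ} (hs : 1 ≤ s) (h : t % s = i) (hi : 1 ≤ i) : (t + (s-1)) % s = i - 1 := by
  have hslt : i < s := h ▸ Nat.mod_lt _ (by omega)
  rw [Nat.add_mod, h, Nat.mod_eq_of_lt (show s - 1 < s by omega),
    show i + (s-1) = (i-1) + s by omega, Nat.add_mod_right,
    Nat.mod_eq_of_lt (by omega)]

/-- build the structured context from a parsed minimal cycle -/
lemma build_false
    (hZ : ∀ n : ℕ, 4 ≤ n → Even n →
      ¬ ∃ f : Fin n → P, Function.Injective f ∧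
        ∀ a b : Fin n,
          (a = b ∨ (Even a.val ∧ (b.val = (a.val + 1) % n ∨ b.val = (a.val + (n - 1)) % n)))
            ↔ f a ≤ f b)
    (a : P) (segs : List (List P × P × P)) (hs2 : 2 ≤ segs.length)
    (hsf : SegsFrom C a segs a)
    (hmin : ∀ (a' : P) (l' : List P), List.Chain C.S a' l' → (a' :: l').getLast? = some a' →
      1 ≤ dwnF a' l' → segs.length ≤ dwnF a' l') : False := by
  classical
  set s := segs.length with hsdef
  set dflt : List P × P × P := ([], a, a) with hdflt
  set vn : ℕ → P := fun i => (segs.getD i dflt).2.2 with hvn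
  set pk : ℕ → P := fun i => (segs.getD i dflt).2.1 with hpk
  set md : ℕ → List P := fun i => (segs.getD i dflt).1 with hmd
  set prev : ℕ → P := fun i => if i = 0 then a else vn (i-1) with hprev
  -- facts from SegsFrom
  have facts : ∀ (sg : List (List P × P × P)) (a' z' : P), SegsFrom C a' sg z' →
      (∀ i, i < sg.length →
        (List.Chain C.UP (if i = 0 then a' else (sg.getD (i-1) dflt).2.2)
          ((sg.getD i dflt).1 ++ [(sg.getD i dflt).2.1])
        ∧ C.DP (sg.getD i dflt).2.1 (sg.getD i dflt).2.2
        ∧ (sg.getD i dflt).2.2 < (sg.getD i dflt).2.1))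
      ∧ (∃ m, List.Chain C.UP (if sg.length = 0 then a' else (sg.getD (sg.length - 1) dflt).2.2) m
          ∧ ((if sg.length = 0 then a' else (sg.getD (sg.length - 1) dflt).2.2) :: m).getLast? = some z') := by
    intro sg
    induction sg with
    | nil =>
      intro a' z' hsf'
      exact ⟨fun i hi => absurd hi (by simp), by simpa using (show ∃ m, List.Chain C.UP a' m ∧ (a' :: m).getLast? = some z' from hsf')⟩
    | cons sg0 rest ih =>
      intro a' z' hsf'
      obtain ⟨md0, pk0, vn0⟩ := sg0
      obtain ⟨hch, hdp0, hlt0, hrest⟩ := hsf'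
      obtain ⟨ihf, ihtrail⟩ := ih vn0 z' hrest
      constructor
      · intro i hi
        rcases Nat.eq_zero_or_pos i with rfl | hipos
        · exact ⟨by simpa using hch, by simpa using hdp0, by simpa using hlt0⟩
        · obtain ⟨j, rfl⟩ : ∃ j, i = j + 1 := ⟨i - 1, by omega⟩
          have hj : j < rest.length := by simpa using hi
          have := ihf j hj
          rcases Nat.eq_zero_or_pos j with rfl | hjpos
          · simpa using this
          · have e1 : ((md0, pk0, vn0) :: rest).getD (j + 1 - 1) dflt = rest.getD (j - 1) dflt := by
              rw [show j + 1 - 1 = (j - 1) + 1 by omega]; rfl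
            simp only [show j + 1 ≠ 0 by omega, if_neg, List.getD_cons_succ, e1]
            rw [if_neg (by omega)] at this
            exact this
      · have hlen : ((md0, pk0, vn0) :: rest).length = rest.length + 1 := rfl
        rcases Nat.eq_zero_or_pos rest.length with hz | hpos
        · simp only [hlen, hz]
          have := ihtrail
          rw [if_pos hz] at this
          simpa using this
        · simp only [hlen]
          rw [if_neg (by omega), show rest.length + 1 - 1 = (rest.length - 1) + 1 by omega,
            List.getD_cons_succ]
          have := ihtrail
          rw [if_neg (by omega)] at this
          exact this
  obtain ⟨F, Ftrail⟩ := facts segs a a hsf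
  obtain ⟨m, hm, hml⟩ := Ftrail
  rw [if_neg (by omega)] at hm hml
  -- build SCtx
  have hs1 : 1 ≤ s := by omega
  refine SCtx.noCrown (D := {
    s := s
    hs := hs2
    v := fun t => vn ((t + (s-1)) % s)
    w := fun t => pk (t % s)
    mid := fun t => if t % s = 0 then m ++ md 0 else md (t % s)
    hvper := fun t => by
      rw [show t + s + (s-1) = (t + (s-1)) + s by omega, Nat.add_mod_right]
    hwper := fun t => by rw [Nat.add_mod_right]
    hrun := fun t => by
      rcases Nat.eq_zero_or_pos (t % s) with h0 | hpos
      · rw [mhelp2 hs1 h0, h0, if_pos rfl]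
        rw [List.append_assoc]
        refine chain_glue _ _ _ _ hm hml ?_
        have := (F 0 (by omega)).1
        rwa [if_pos rfl] at this
      · rw [mhelp3 hs1 rfl hpos, if_neg (by omega)]
        have := (F (t % s) (Nat.mod_lt _ (by omega))).1
        rwa [if_neg (by omega)] at this
    hdp := fun t => by
      rw [show t + 1 + (s-1) = t + s by omega, Nat.add_mod_right]
      exact (F (t % s) (Nat.mod_lt _ (by omega))).2.1
    hlt := fun t => by
      rw [show t + 1 + (s-1) = t + s by omega, Nat.add_mod_right]
      exact (F (t % s) (Nat.mod_lt _ (by omega))).2.2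
    hmin := fun a' l' h1 h2 h3 => hmin a' l' h1 h2 h3 }) hZ
-- === Part 8: main theorem ===

end ST16

/-- for a finite diamond-free poset with no full subposet isomorphic to a crown
`Z_n` (even `n ≥ 4`), and adapted orders `⊲₁, ⊲₂`, the transitive closure of
`(Dec(⊲₁) ∩ Dec(⊲₂)) ∪ Inc(⊲₁) ∪ Inc(⊲₂)` is a partial order. -/
theorem transGen_meet_rel_isPartialOrder
    {P : Type*} [PartialOrder P] [Finite P]
    (hdf : ¬ ∃ a b c d : P, a ≤ b ∧ b ≤ d ∧ a ≤ c ∧ c ≤ d ∧ ¬ b ≤ c ∧ ¬ c ≤ b)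
    (hZ : ∀ n : ℕ, 4 ≤ n → Even n →
      ¬ ∃ f : Fin n → P, Function.Injective f ∧
        ∀ a b : Fin n,
          (a = b ∨ (Even a.val ∧ (b.val = (a.val + 1) % n ∨ b.val = (a.val + (n - 1)) % n)))
            ↔ f a ≤ f b)
    (lhd₁ lhd₂ : P → P → Prop)
    (hpo₁ : IsPartialOrder P lhd₁) (hpo₂ : IsPartialOrder P lhd₂)
    (had₁ : AdaptedOrd lhd₁) (had₂ : AdaptedOrd lhd₂) :
    IsPartialOrder P (Relation.TransGen
      (fun x y => (DecRel lhd₁ x y ∧ DecRel lhd₂ x y) ∨ IncRel lhd₁ x y ∨ IncRel lhd₂ x y)) := by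
  classical
  set C : ST16.Ctx P := {
    l := fun b => cond b lhd₁ lhd₂
    hdf := by
      intro a b c d h1 h2 h3 h4
      by_contra hcon
      push_neg at hcon
      exact hdf ⟨a, b, c, d, h1, h2, h3, h4, hcon.1, hcon.2⟩
    lrefl := by intro b x; cases b
                · exact hpo₂.refl x
                · exact hpo₁.refl x
    ltrans := by intro b x y z h1 h2; cases b
                 · exact hpo₂.trans x y z h1 h2
                 · exact hpo₁.trans x y z h1 h2
    lantisymm := by intro b x y h1 h2; cases b
                    · exact hpo₂.antisymm x y h1 h2
                    · exact hpo₁.antisymm x y h1 h2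
    had := by intro b; cases b
              · exact had₂
              · exact had₁ } with hC
  have hSR : ∀ x y : P,
      ((DecRel lhd₁ x y ∧ DecRel lhd₂ x y) ∨ IncRel lhd₁ x y ∨ IncRel lhd₂ x y) ↔ C.S x y := by
    intro x y
    constructor
    · rintro (⟨h1, h2⟩ | h | h)
      · refine Or.inl (fun b => ?_)
        cases b
        · exact h2
        · exact h1
      · exact Or.inr ⟨true, h⟩
      · exact Or.inr ⟨false, h⟩
    · rintro (h | ⟨b, hb⟩)
      · exact Or.inl ⟨h true, h false⟩
      · cases b
        · exact Or.inr (Or.inr hb)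
        · exact Or.inr (Or.inl hb)
  refine { refl := ?_, trans := fun _ _ _ => Relation.TransGen.trans, antisymm := ?_ }
  · intro x
    refine Relation.TransGen.single (Or.inr (Or.inl ⟨le_refl x, fun k h1 h2 => ?_⟩))
    have : k = x := le_antisymm h2 h1
    subst this
    exact hpo₁.refl k
  · intro x y hxy hyx
    by_contra hne
    exfalso
    have hxy' : Relation.ReflTransGen C.S x y :=
      (Relation.TransGen.mono (fun a b h => (hSR a b).1 h) _ _ hxy).to_reflTransGen
    have hyx' : Relation.ReflTransGen C.S y x :=
      (Relation.TransGen.mono (fun a b h => (hSR a b).1 h) _ _ hyx).to_reflTransGen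
    obtain ⟨l₁, hc₁, hl₁⟩ := List.exists_isChain_cons_of_relationReflTransGen hxy'
    obtain ⟨l₂, hc₂, hl₂⟩ := List.exists_isChain_cons_of_relationReflTransGen hyx'
    have hl₁' : (x :: l₁).getLast? = some y := by
      rw [List.getLast?_eq_getLast (List.cons_ne_nil _ _), hl₁]
    have hl₂' : (y :: l₂).getLast? = some x := by
      rw [List.getLast?_eq_getLast (List.cons_ne_nil _ _), hl₂]
    have hp1 : ST16.PTo C x l₁ y := ⟨hc₁, hl₁'⟩
    have hp2 : ST16.PTo C y l₂ x := ⟨hc₂, hl₂'⟩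
    have hcyc := hp1.comp hp2
    have hdpos : 1 ≤ ST16.dwnF x (l₁ ++ l₂) := by
      by_contra h0
      have h0' : ST16.dwnF x (l₁ ++ l₂) = 0 := by omega
      rw [hp1.dwn_comp hp2] at h0'
      have hxy2 : x ≤ y := ST16.le_of_chain_dwn0 hc₁ (by omega) hl₁'
      have hyx2 : y ≤ x := ST16.le_of_chain_dwn0 hc₂ (by omega) hl₂'
      exact hne (le_antisymm hxy2 hyx2)
    set T : Set ℕ := {d | ∃ a l, List.Chain C.S a l ∧ (a :: l).getLast? = some a ∧
      ST16.dwnF a l = d ∧ 1 ≤ d} with hT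
    have hTne : T.Nonempty := ⟨ST16.dwnF x (l₁ ++ l₂), x, l₁ ++ l₂, hcyc.1, hcyc.2, rfl, hdpos⟩
    obtain ⟨a₀, l₀, hch₀, hla₀, hd₀, hd₀pos⟩ := Nat.sInf_mem hTne
    have hminT : ∀ (a' : P) (l' : List P), List.Chain C.S a' l' →
        (a' :: l').getLast? = some a' → 1 ≤ ST16.dwnF a' l' → sInf T ≤ ST16.dwnF a' l' :=
      fun a' l' h1 h2 h3 => Nat.sInf_le ⟨a', l', h1, h2, rfl, h3⟩
    obtain ⟨segs, hlen, hsf⟩ := ST16.parse_lin l₀ a₀ a₀ hch₀ hla₀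
    have hlen' : segs.length = sInf T := by rw [hlen, hd₀]
    rcases eq_or_lt_of_le hd₀pos with h1 | h2
    · -- single descent : impossible
      have hlen1 : segs.length = 1 := by omega
      rcases segs with _ | ⟨⟨md, pk, vn⟩, rest⟩
      · simp at hlen1
      · have hrest : rest = [] := by
          simp only [List.length_cons] at hlen1
          exact List.length_eq_zero_iff.1 (by omega)
        subst hrest
        obtain ⟨hch, hdp, hlt, htr⟩ := hsf
        obtain ⟨m, hm, hml⟩ := htr
        have hcc : List.Chain C.UP vn (m ++ (md ++ [pk])) :=
          ST16.chain_glue _ _ _ _ hm hml hch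
        have hll : (vn :: (m ++ (md ++ [pk]))).getLast? = some pk :=
          ST16.getLast?_glue _ _ _ _ _ hml (ST16.getLast?_snoc _ _ _) (by simp)
        exact absurd (ST16.s1_aux _ _ _ hcc hll hdp) (ne_of_lt hlt)
    · exact ST16.build_false hZ a₀ segs (by omega) hsf
        (fun a' l' h1' h2' h3' => hlen' ▸ hminT a' l' h1' h2' h3')
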